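/- The scaled intersection volume at contact α₂(R;R) satisfies the asymptotic behavior α₂(R;R) ~ (6/π)^{1/2} (3/4)^{d/2} d^{-1/2} as d → ∞; in particular α₂(R;R) · (4/3)^{d/2} d^{1/2} → (6/π)^{1/2}. -/

import Mathlib

open Real Filter

/-- The scaled intersection volume of two `d`-dimensional balls of radius `R` at center
distance `r`, given by `α₂(r;R) = c(d) ∫₀^{arccos(r/(2R))} sin^d θ dθ` with
`c(d) = 2Γ(1+d/2)/(√π Γ((d+1)/2))`. -/
noncomputable def scaledIntersectionVol (d : ℕ) (r R : ℝ) : ℝ :=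
  (2 * Real.Gamma (1 + d / 2) / (Real.sqrt π * Real.Gamma ((d + 1) / 2))) *
    ∫ θ in (0 : ℝ)..Real.arccos (r / (2 * R)), Real.sin θ ^ d

open intervalIntegral Topology


noncomputable def Wal (d : ℕ) : ℝ := ∫ θ in (0:ℝ)..(π/2), Real.sin θ ^ d

lemma Wal_zero : Wal 0 = π / 2 := by simp [Wal]

lemma Wal_one : Wal 1 = 1 := by simp [Wal]

lemma Wal_succ_succ (d : ℕ) : Wal (d + 2) = (d + 1) / (d + 2) * Wal d := by
  rw [Wal, integral_sin_pow]
  simp [Wal]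

lemma Wal_pos (d : ℕ) : 0 < Wal d := by
  apply intervalIntegral.intervalIntegral_pos_of_pos_on
  · exact (Continuous.pow (by continuity) d).intervalIntegrable 0 (π/2)
  · intro x hx
    exact pow_pos (Real.sin_pos_of_pos_of_lt_pi hx.1 (lt_trans hx.2 (by linarith [pi_pos]))) d
  · linarith [pi_pos]

lemma Wal_succ_le (d : ℕ) : Wal (d + 1) ≤ Wal d := by
  apply intervalIntegral.integral_mono_on (by linarith [pi_pos])
    ((Continuous.pow (by continuity) _).intervalIntegrable 0 (π/2))
    ((Continuous.pow (by continuity) _).intervalIntegrable 0 (π/2))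
  intro x hx
  exact pow_le_pow_of_le_one (Real.sin_nonneg_of_nonneg_of_le_pi hx.1
    (le_trans hx.2 (by linarith [pi_pos]))) (Real.sin_le_one x) (Nat.le_succ d)

lemma Wal_prod (d : ℕ) : ((d : ℝ) + 1) * (Wal d * Wal (d + 1)) = π / 2 := by
  induction d with
  | zero => simp [Wal_zero, Wal_one]
  | succ n ih =>
    rw [show n + 1 + 1 = n + 2 from rfl, Wal_succ_succ n]
    push_cast
    have h2 : (n : ℝ) + 2 ≠ 0 := by positivity
    field_simp
    field_simp at ih
    nlinarith [ih]

lemma sq_Wal_tendsto : Tendsto (fun d : ℕ => (d : ℝ) * Wal d ^ 2) atTop (𝓝 (π / 2)) := by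
  apply tendsto_of_tendsto_of_tendsto_of_le_of_le
    (g := fun d : ℕ => π / 2 * ((d : ℝ) / (d + 1))) (h := fun _ : ℕ => π / 2)
  · have := (tendsto_natCast_div_add_atTop (1 : ℝ)).const_mul (π / 2)
    simpa using this
  · exact tendsto_const_nhds
  · intro d
    have h := Wal_prod d
    have h1 := Wal_succ_le d
    have h2 := Wal_pos (d + 1)
    have hd1 : (0:ℝ) < (d:ℝ) + 1 := by positivity
    show π / 2 * ((d:ℝ) / (d + 1)) ≤ (d:ℝ) * Wal d ^ 2
    rw [show π / 2 * ((d:ℝ) / (d + 1)) = (π / 2 * d) / (d + 1) by ring, div_le_iff₀ hd1]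
    have e : π / 2 * (d:ℝ) = ((d:ℝ) * ((d:ℝ)+1)) * (Wal d * Wal (d + 1)) := by rw [← h]; ring
    nlinarith [e, mul_nonneg (mul_nonneg (mul_nonneg (Nat.cast_nonneg d : (0:ℝ) ≤ d) hd1.le) (Wal_pos d).le) (sub_nonneg.2 h1)]
  · intro d
    cases d with
    | zero => simp; positivity
    | succ n =>
      have h := Wal_prod n
      have h1 := Wal_succ_le n
      have h2 := Wal_pos (n + 1)
      push_cast
      have key : ((n:ℝ)+1) * Wal (n+1) ^ 2 ≤ ((n:ℝ)+1) * (Wal n * Wal (n+1)) := by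
        nlinarith [mul_nonneg (by positivity : (0:ℝ) ≤ (n:ℝ)+1) (mul_nonneg h2.le (sub_nonneg.2 h1))]
      linarith

lemma sqrt_Wal_tendsto : Tendsto (fun d : ℕ => Real.sqrt d * Wal d) atTop (𝓝 (Real.sqrt (π / 2))) := by
  have := (Real.continuous_sqrt.tendsto (π/2)).comp sq_Wal_tendsto
  refine this.congr fun d => ?_
  rw [Function.comp_apply, Real.sqrt_mul (Nat.cast_nonneg d), Real.sqrt_sq (Wal_pos d).le]

lemma gamma_Wal (d : ℕ) :
    Real.sqrt π * Real.Gamma (((d : ℝ) + 1) / 2) = 2 * Real.Gamma (1 + (d : ℝ) / 2) * Wal d := by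
  induction d using Nat.twoStepInduction with
  | zero =>
    simp only [Nat.cast_zero, Wal_zero]
    rw [show ((0:ℝ) + 1)/2 = 1/2 by norm_num, show (1:ℝ) + 0/2 = 1 by norm_num,
      Real.Gamma_one, Real.Gamma_one_half_eq, Real.mul_self_sqrt Real.pi_pos.le]
    ring
  | one =>
    simp only [Nat.cast_one, Wal_one]
    rw [show ((1:ℝ) + 1)/2 = 1 by norm_num, show (1:ℝ) + 1/2 = 1/2 + 1 by norm_num,
      Real.Gamma_one, Real.Gamma_add_one (by norm_num), Real.Gamma_one_half_eq]
    ring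
  | more n ih _ =>
    have h1 : ((n:ℝ) + 2 + 1) / 2 = ((n:ℝ) + 1) / 2 + 1 := by ring
    have h2 : (1:ℝ) + ((n:ℝ) + 2) / 2 = (1 + (n:ℝ) / 2) + 1 := by ring
    push_cast
    rw [h1, h2, Real.Gamma_add_one (by positivity), Real.Gamma_add_one (by positivity),
      Wal_succ_succ n]
    rw [show Real.sqrt π * (((n:ℝ) + 1) / 2 * Real.Gamma (((n:ℝ) + 1) / 2))
        = ((n:ℝ) + 1) / 2 * (Real.sqrt π * Real.Gamma (((n:ℝ) + 1) / 2)) by ring, ih]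
    have hn2 : ((n:ℝ) + 2) ≠ 0 := by positivity
    field_simp
    ring

lemma sin_cos_key {s c : ℝ} (hsc : s ^ 2 + c ^ 2 = 1) (hs : 0 ≤ s) (hc : 0 ≤ c) :
    (4 * Real.sqrt 3 * s - 4) * c ≤ 1 := by
  have h3 : Real.sqrt 3 ^ 2 = 3 := Real.sq_sqrt (by norm_num)
  have h3' : (0:ℝ) ≤ Real.sqrt 3 := Real.sqrt_nonneg 3
  have h1 : 0 ≤ 2 - Real.sqrt 3 * s - c := by
    nlinarith [sq_nonneg (s - Real.sqrt 3 * c), sq_nonneg (Real.sqrt 3 * s + c)]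
  have h2 : 0 ≤ 2 + Real.sqrt 3 * s + 3 * c := by positivity
  nlinarith [mul_nonneg h1 h2]

lemma integral_sin_pow_mul_cos (k : ℕ) :
    ∫ θ in (0:ℝ)..(π/3), Real.sin θ ^ k * Real.cos θ
      = (Real.sqrt 3 / 2) ^ (k + 1) / (k + 1) := by
  have h := integral_sin_pow_mul_cos_pow_odd (a := 0) (b := π/3) k 0
  simp only [mul_zero, zero_add, pow_one, pow_zero, mul_one] at h
  rw [h, integral_pow]
  simp [Real.sin_pi_div_three]

lemma I_upper (d : ℕ) :
    (∫ θ in (0:ℝ)..(π/3), Real.sin θ ^ d)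
      ≤ 2 * ((Real.sqrt 3 / 2) ^ (d + 1) / (d + 1)) := by
  have key : (∫ θ in (0:ℝ)..(π/3), Real.sin θ ^ d)
      ≤ ∫ θ in (0:ℝ)..(π/3), 2 * (Real.sin θ ^ d * Real.cos θ) := by
    apply intervalIntegral.integral_mono_on (by positivity)
      ((by continuity : Continuous fun θ : ℝ => Real.sin θ ^ d).intervalIntegrable 0 (π/3))
      ((by continuity : Continuous fun θ : ℝ => 2 * (Real.sin θ ^ d * Real.cos θ)).intervalIntegrable 0 (π/3))
    intro x hx
    have hx2 : x ≤ π / 2 := le_trans hx.2 (by linarith [pi_pos])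
    have hcos : 1 / 2 ≤ Real.cos x := by
      rw [← Real.cos_pi_div_three]
      exact Real.cos_le_cos_of_nonneg_of_le_pi hx.1 (by linarith [pi_pos]) hx.2
    have hsin : 0 ≤ Real.sin x ^ d :=
      pow_nonneg (Real.sin_nonneg_of_nonneg_of_le_pi hx.1 (by linarith [pi_pos])) d
    nlinarith
  rw [intervalIntegral.integral_const_mul, integral_sin_pow_mul_cos] at key
  exact key

lemma I_lower (d : ℕ) :
    4 * Real.sqrt 3 * ((Real.sqrt 3 / 2) ^ (d + 2) / (d + 2))
        - 4 * ((Real.sqrt 3 / 2) ^ (d + 1) / (d + 1))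
      ≤ ∫ θ in (0:ℝ)..(π/3), Real.sin θ ^ d := by
  have key : (∫ θ in (0:ℝ)..(π/3),
        4 * Real.sqrt 3 * (Real.sin θ ^ (d + 1) * Real.cos θ) - 4 * (Real.sin θ ^ d * Real.cos θ))
      ≤ ∫ θ in (0:ℝ)..(π/3), Real.sin θ ^ d := by
    apply intervalIntegral.integral_mono_on (by positivity)
      ((by continuity : Continuous fun θ : ℝ =>
        4 * Real.sqrt 3 * (Real.sin θ ^ (d+1) * Real.cos θ) - 4 * (Real.sin θ ^ d * Real.cos θ)).intervalIntegrable 0 (π/3))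
      ((by continuity : Continuous fun θ : ℝ => Real.sin θ ^ d).intervalIntegrable 0 (π/3))
    intro x hx
    have hpi : x ≤ π := le_trans hx.2 (by linarith [pi_pos])
    have hs : 0 ≤ Real.sin x := Real.sin_nonneg_of_nonneg_of_le_pi hx.1 hpi
    have hc : 0 ≤ Real.cos x := Real.cos_nonneg_of_mem_Icc
      ⟨by linarith [hx.1, pi_pos], le_trans hx.2 (by linarith [pi_pos])⟩
    have hkey := sin_cos_key (Real.sin_sq_add_cos_sq x) hs hc
    have hsd : 0 ≤ Real.sin x ^ d := pow_nonneg hs d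
    calc 4 * Real.sqrt 3 * (Real.sin x ^ (d+1) * Real.cos x) - 4 * (Real.sin x ^ d * Real.cos x)
        = Real.sin x ^ d * ((4 * Real.sqrt 3 * Real.sin x - 4) * Real.cos x) := by ring
      _ ≤ Real.sin x ^ d * 1 := by
          exact mul_le_mul_of_nonneg_left hkey hsd
      _ = Real.sin x ^ d := by ring
  rw [intervalIntegral.integral_sub, intervalIntegral.integral_const_mul,
    intervalIntegral.integral_const_mul, integral_sin_pow_mul_cos, integral_sin_pow_mul_cos] at key
  · push_cast at key
    have e : ((d:ℝ) + 1) + 1 = (d:ℝ) + 2 := by ring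
    rw [e] at key
    exact key
  · exact ((by continuity : Continuous fun θ : ℝ =>
      4 * Real.sqrt 3 * (Real.sin θ ^ (d+1) * Real.cos θ))).intervalIntegrable 0 (π/3)
  · exact ((by continuity : Continuous fun θ : ℝ =>
      4 * (Real.sin θ ^ d * Real.cos θ))).intervalIntegrable 0 (π/3)

lemma C_tendsto :
    Tendsto (fun d : ℕ => (d : ℝ) * (2 / Real.sqrt 3) ^ d * ∫ θ in (0:ℝ)..(π/3), Real.sin θ ^ d)
      atTop (𝓝 (Real.sqrt 3)) := by
  have h3 : (0:ℝ) < Real.sqrt 3 := Real.sqrt_pos.mpr (by norm_num)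
  have h3sq : Real.sqrt 3 ^ 2 = 3 := Real.sq_sqrt (by norm_num)
  have hkey : (2 / Real.sqrt 3) * (Real.sqrt 3 / 2) = 1 := by field_simp
  have hone : ∀ d : ℕ, (2 / Real.sqrt 3) ^ d * (Real.sqrt 3 / 2) ^ d = 1 := fun d => by
    rw [← mul_pow, hkey, one_pow]
  apply tendsto_of_tendsto_of_tendsto_of_le_of_le
    (g := fun d : ℕ => 3 * Real.sqrt 3 * ((d : ℝ) / (d + 2)) - 2 * Real.sqrt 3 * ((d : ℝ) / (d + 1)))
    (h := fun d : ℕ => Real.sqrt 3 * ((d : ℝ) / (d + 1)))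
  · have l1 := (tendsto_natCast_div_add_atTop (2 : ℝ)).const_mul (3 * Real.sqrt 3)
    have l2 := (tendsto_natCast_div_add_atTop (1 : ℝ)).const_mul (2 * Real.sqrt 3)
    have := l1.sub l2
    simp only [mul_one] at this
    convert this using 2
    ring
  · have := (tendsto_natCast_div_add_atTop (1 : ℝ)).const_mul (Real.sqrt 3)
    simpa using this
  · intro d
    have hnn : (0:ℝ) ≤ (d : ℝ) * (2 / Real.sqrt 3) ^ d := by positivity
    have := mul_le_mul_of_nonneg_left (I_lower d) hnn
    refine le_trans (le_of_eq (Eq.symm ?_)) this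
    have e2 : (2 / Real.sqrt 3) ^ d * (Real.sqrt 3 / 2) ^ (d + 2) = 3 / 4 := by
      rw [pow_add, ← mul_assoc, hone d, one_mul]
      rw [show (Real.sqrt 3 / 2) ^ 2 = Real.sqrt 3 ^ 2 / 4 by ring, h3sq]
    have e1 : (2 / Real.sqrt 3) ^ d * (Real.sqrt 3 / 2) ^ (d + 1) = Real.sqrt 3 / 2 := by
      rw [pow_add, ← mul_assoc, hone d, one_mul, pow_one]
    calc (d:ℝ) * (2 / Real.sqrt 3) ^ d
          * (4 * Real.sqrt 3 * ((Real.sqrt 3 / 2) ^ (d + 2) / ((d:ℝ) + 2))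
            - 4 * ((Real.sqrt 3 / 2) ^ (d + 1) / ((d:ℝ) + 1)))
        = 4 * Real.sqrt 3 * (d:ℝ) * ((2 / Real.sqrt 3) ^ d * (Real.sqrt 3 / 2) ^ (d + 2)) / ((d:ℝ) + 2)
          - 4 * (d:ℝ) * ((2 / Real.sqrt 3) ^ d * (Real.sqrt 3 / 2) ^ (d + 1)) / ((d:ℝ) + 1) := by ring
      _ = 4 * Real.sqrt 3 * (d:ℝ) * (3 / 4) / ((d:ℝ) + 2) - 4 * (d:ℝ) * (Real.sqrt 3 / 2) / ((d:ℝ) + 1) := by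
          rw [e2, e1]
      _ = 3 * Real.sqrt 3 * ((d:ℝ) / ((d:ℝ) + 2)) - 2 * Real.sqrt 3 * ((d:ℝ) / ((d:ℝ) + 1)) := by ring
  · intro d
    have hnn : (0:ℝ) ≤ (d : ℝ) * (2 / Real.sqrt 3) ^ d := by positivity
    have := mul_le_mul_of_nonneg_left (I_upper d) hnn
    refine le_trans this (le_of_eq ?_)
    have e1 : (2 / Real.sqrt 3) ^ d * (Real.sqrt 3 / 2) ^ (d + 1) = Real.sqrt 3 / 2 := by
      rw [pow_add, ← mul_assoc, hone d, one_mul, pow_one]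
    have hd1 : ((d:ℝ) + 1) ≠ 0 := by positivity
    rw [show (d : ℝ) * (2 / Real.sqrt 3) ^ d * (2 * ((Real.sqrt 3 / 2) ^ (d + 1) / ((d:ℝ) + 1)))
        = 2 * (d : ℝ) * ((2 / Real.sqrt 3) ^ d * (Real.sqrt 3 / 2) ^ (d + 1)) / ((d:ℝ) + 1) by ring,
      e1]
    ring


/-- The scaled intersection volume at contact satisfies
`α₂(R;R) ~ (6/π)^{1/2} (3/4)^{d/2} d^{-1/2}` as `d → ∞`; equivalently,
`α₂(R;R) · (4/3)^{d/2} · d^{1/2} → (6/π)^{1/2}`. -/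
theorem scaledIntersectionVol_contact_asymptotics (R : ℝ) (hR : 0 < R) :
    Tendsto (fun d : ℕ =>
        scaledIntersectionVol d R R * (4 / 3 : ℝ) ^ ((d : ℝ) / 2) * Real.sqrt d)
      atTop (nhds (Real.sqrt (6 / π))) := by
  have h3 : (0:ℝ) < Real.sqrt 3 := Real.sqrt_pos.mpr (by norm_num)
  have harc : Real.arccos (R / (2 * R)) = π / 3 := by
    rw [show R / (2 * R) = 1 / 2 by field_simp,
      show (1:ℝ)/2 = Real.cos (π/3) by rw [Real.cos_pi_div_three],
      Real.arccos_cos (by positivity) (by linarith [pi_pos])]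
  have hrpow : ∀ d : ℕ, (4 / 3 : ℝ) ^ ((d : ℝ) / 2) = (2 / Real.sqrt 3) ^ d := by
    intro d
    rw [show ((d:ℝ)/2) = (1/2) * (d:ℝ) by ring, Real.rpow_mul (by norm_num), Real.rpow_natCast]
    congr 1
    rw [← Real.sqrt_eq_rpow,
      show (4/3:ℝ) = (2 / Real.sqrt 3) ^ 2 by
        rw [div_pow, Real.sq_sqrt (by norm_num : (0:ℝ) ≤ 3)]; norm_num,
      Real.sqrt_sq (by positivity)]
  have hc : ∀ d : ℕ, 2 * Real.Gamma (1 + (d:ℝ) / 2) / (Real.sqrt π * Real.Gamma (((d:ℝ) + 1) / 2))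
      = 1 / Wal d := by
    intro d
    rw [gamma_Wal d]
    have hG : 0 < Real.Gamma (1 + (d:ℝ) / 2) := Real.Gamma_pos_of_pos (by positivity)
    rw [div_eq_div_iff (mul_pos (mul_pos two_pos hG) (Wal_pos d)).ne' (Wal_pos d).ne']
    ring
  have heq : ∀ d : ℕ,
      scaledIntersectionVol d R R * (4 / 3 : ℝ) ^ ((d : ℝ) / 2) * Real.sqrt d
        = ((d : ℝ) * (2 / Real.sqrt 3) ^ d * ∫ θ in (0:ℝ)..(π/3), Real.sin θ ^ d)
          / (Real.sqrt d * Wal d) := by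
    intro d
    rw [scaledIntersectionVol, harc, hc d, hrpow d]
    rcases Nat.eq_zero_or_pos d with rfl | hd
    · simp
    · have hsd : (0:ℝ) < Real.sqrt d := Real.sqrt_pos.mpr (by exact_mod_cast hd)
      have hdd : Real.sqrt d * Real.sqrt d = (d:ℝ) := Real.mul_self_sqrt (Nat.cast_nonneg d)
      rw [eq_div_iff (mul_pos hsd (Wal_pos d)).ne']
      rw [show 1 / Wal d * (∫ θ in (0:ℝ)..(π/3), Real.sin θ ^ d) * (2 / Real.sqrt 3) ^ d
            * Real.sqrt d * (Real.sqrt d * Wal d)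
          = (Real.sqrt d * Real.sqrt d) * (2 / Real.sqrt 3) ^ d
            * (∫ θ in (0:ℝ)..(π/3), Real.sin θ ^ d) * (Wal d / Wal d) by ring,
        hdd, div_self (Wal_pos d).ne']
      ring
  have hne : Real.sqrt (π / 2) ≠ 0 := by positivity
  have hlim := C_tendsto.div sqrt_Wal_tendsto hne
  have hval : Real.sqrt 3 / Real.sqrt (π / 2) = Real.sqrt (6 / π) := by
    rw [← Real.sqrt_div (by norm_num : (0:ℝ) ≤ 3), show (3:ℝ)/(π/2) = 6/π by
      rw [div_div_eq_mul_div]; ring]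
  rw [← hval]
  exact hlim.congr fun d => (heq d).symm
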